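/- In the weak Hopf algebra H = End_k(A)⊗U, the pair (Θ, Θ̄) with Θ = Σ_{λ,μ∈T} E_{λ,λ+μ}⊗E_{λλ}P_μ and Θ̄ = Σ_{λ,μ∈T} E_{λ+μ,λ}⊗E_{λλ}P_μ is a twist for H: Θ = Δ_H(1)Θ, Θ̄ = Θ̄Δ_H(1), ΘΘ̄ = Δ_H(1), (ε_H⊗id)Θ = (id⊗ε_H)Θ = (ε_H⊗id)Θ̄ = (id⊗ε_H)Θ̄ = 1, (Δ_H⊗id)(Θ)(Θ⊗1) = (id⊗Δ_H)(Θ)(1⊗Θ), (Θ̄⊗1)(Δ_H⊗id)(Θ̄) = (1⊗Θ̄)(id⊗Δ_H)(Θ̄), (Δ_H⊗id)(Θ̄)(id⊗Δ_H)(Θ) = (Θ⊗1)(1⊗Θ̄), and (id⊗Δ_H)(Θ̄)(Δ_H⊗id)(Θ) = (1⊗Θ)(Θ̄⊗1). -/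

import Mathlib

open TensorProduct

noncomputable section

namespace WHA

variable (k B : Type*) [Field k] [Ring B] [Algebra k B]

/-- `x ↦ x ⊗ 1`, the embedding of `B ⊗ B` into legs 1,2 of `B ⊗ B ⊗ B`. -/
def leg12 : B ⊗[k] B →ₗ[k] B ⊗[k] (B ⊗[k] B) :=
  (TensorProduct.assoc k B B B).toLinearMap ∘ₗ (TensorProduct.mk k (B ⊗[k] B) B).flip 1

/-- `x ↦ 1 ⊗ x`, the embedding of `B ⊗ B` into legs 2,3 of `B ⊗ B ⊗ B`. -/
def leg23 : B ⊗[k] B →ₗ[k] B ⊗[k] (B ⊗[k] B) :=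
  TensorProduct.mk k B (B ⊗[k] B) 1

/-- `a ⊗ b ↦ a ⊗ 1 ⊗ b`, the embedding of `B ⊗ B` into legs 1,3 of `B ⊗ B ⊗ B`. -/
def leg13 : B ⊗[k] B →ₗ[k] B ⊗[k] (B ⊗[k] B) :=
  TensorProduct.map LinearMap.id (TensorProduct.mk k B B 1)

/-- `Δ ⊗ id`, landing in the right-associated triple tensor product. -/
def ext12 (Δ : B →ₗ[k] B ⊗[k] B) : B ⊗[k] B →ₗ[k] B ⊗[k] (B ⊗[k] B) :=
  (TensorProduct.assoc k B B B).toLinearMap ∘ₗ TensorProduct.map Δ LinearMap.id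

/-- `id ⊗ Δ`. -/
def ext23 (Δ : B →ₗ[k] B ⊗[k] B) : B ⊗[k] B →ₗ[k] B ⊗[k] (B ⊗[k] B) :=
  TensorProduct.map LinearMap.id Δ

/-- `(ε ⊗ id)` composed with the canonical isomorphism `k ⊗ B ≅ B`. -/
def epsL (ε : B →ₗ[k] k) : B ⊗[k] B →ₗ[k] B :=
  (TensorProduct.lid k B).toLinearMap ∘ₗ TensorProduct.map ε LinearMap.id

/-- `(id ⊗ ε)` composed with the canonical isomorphism `B ⊗ k ≅ B`. -/
def epsR (ε : B →ₗ[k] k) : B ⊗[k] B →ₗ[k] B :=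
  (TensorProduct.rid k B).toLinearMap ∘ₗ TensorProduct.map LinearMap.id ε

/-- Pairing of two linear functionals against an element of `B ⊗ B`. -/
def pairF (φ ψ : B →ₗ[k] k) : B ⊗[k] B →ₗ[k] k :=
  (TensorProduct.lid k k).toLinearMap ∘ₗ TensorProduct.map φ ψ

/-- The multiplication map `B ⊗ B → B`. -/
def mul2 : B ⊗[k] B →ₗ[k] B := LinearMap.mul' k B

end WHA

namespace DQG

variable (k : Type*) [Field k]
variable (T : Type*) [AddCommGroup T] [Fintype T] [DecidableEq T]
variable (U : Type*) [Ring U] [HopfAlgebra k U]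

/-- The matrix units `E_{λμ}`. -/
def E (l m : T) : Matrix T T k := Matrix.single l m 1

/-- The `(λ,μ)` matrix entry, as a linear functional. -/
def entry (l m : T) : Matrix T T k →ₗ[k] k where
  toFun A := A l m
  map_add' _ _ := rfl
  map_smul' _ _ := rfl

/-- The comultiplication of `End_k(A)`: `Δ(E_{λμ}) = E_{λμ} ⊗ E_{λμ}`. -/
def ΔM : Matrix T T k →ₗ[k] Matrix T T k ⊗[k] Matrix T T k :=
  ∑ l : T, ∑ m : T, (entry k T l m).smulRight (E k T l m ⊗ₜ[k] E k T l m)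

/-- The counit of `End_k(A)`: `ε(E_{λμ}) = 1`. -/
def εM : Matrix T T k →ₗ[k] k := ∑ l : T, ∑ m : T, entry k T l m

/-- The antipode of `End_k(A)`: `S(E_{λμ}) = E_{μλ}`. -/
def SM : Matrix T T k →ₗ[k] Matrix T T k :=
  ∑ l : T, ∑ m : T, (entry k T l m).smulRight (E k T m l)

/-- The comultiplication of the tensor product weak Hopf algebra `H = End_k(A) ⊗ U`. -/
def ΔH : (Matrix T T k ⊗[k] U) →ₗ[k] (Matrix T T k ⊗[k] U) ⊗[k] (Matrix T T k ⊗[k] U) :=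
  (TensorProduct.tensorTensorTensorComm k (Matrix T T k) (Matrix T T k) U U).toLinearMap ∘ₗ
    TensorProduct.map (ΔM k T) Coalgebra.comul

/-- The counit of `H = End_k(A) ⊗ U`. -/
def εH : (Matrix T T k ⊗[k] U) →ₗ[k] k :=
  (TensorProduct.lid k k).toLinearMap ∘ₗ TensorProduct.map (εM k T) Coalgebra.counit

/-- The antipode of `H = End_k(A) ⊗ U`. -/
def SH : (Matrix T T k ⊗[k] U) →ₗ[k] (Matrix T T k ⊗[k] U) :=
  TensorProduct.map (SM k T) (HopfAlgebra.antipode (R := k))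

set_option maxHeartbeats 1000000 in
/-- The canonical ring structure on the triple tensor power of `H = End_k(A) ⊗ U`
(made explicit to help instance resolution). -/
instance triRing : Ring ((Matrix T T k ⊗[k] U) ⊗[k] ((Matrix T T k ⊗[k] U) ⊗[k] (Matrix T T k ⊗[k] U))) := by
  exact Algebra.TensorProduct.instRing (R := k) (A := Matrix T T k ⊗[k] U)
    (B := (Matrix T T k ⊗[k] U) ⊗[k] (Matrix T T k ⊗[k] U))

variable (P : T → U)

/-- The hypotheses on the system of idempotents `{P_μ}` spanning the abelian Hopf
subalgebra `A ⊆ U`. -/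
structure IsPSystem : Prop where
  orth : ∀ m n : T, P m * P n = if m = n then P m else 0
  sum_one : ∑ m : T, P m = 1
  comul_P : ∀ m : T, Coalgebra.comul (R := k) (P m) = ∑ n : T, P n ⊗ₜ[k] P (m - n)
  counit_P : ∀ m : T, Coalgebra.counit (R := k) (P m) = if m = 0 then (1 : k) else 0
  antipode_P : ∀ m : T, HopfAlgebra.antipode (R := k) (P m) = P (-m)

/-- The element `Θ = Σ_{λμ} E_{λ,λ+μ} ⊗ E_{λλ}P_μ` of `H ⊗ H`. -/
def Θ : (Matrix T T k ⊗[k] U) ⊗[k] (Matrix T T k ⊗[k] U) :=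
  ∑ l : T, ∑ m : T, ((E k T l (l + m)) ⊗ₜ[k] (1 : U)) ⊗ₜ[k] ((E k T l l) ⊗ₜ[k] P m)

/-- The element `Θ̄ = Σ_{λμ} E_{λ+μ,λ} ⊗ E_{λλ}P_μ` of `H ⊗ H`. -/
def Θbar : (Matrix T T k ⊗[k] U) ⊗[k] (Matrix T T k ⊗[k] U) :=
  ∑ l : T, ∑ m : T, ((E k T (l + m) l) ⊗ₜ[k] (1 : U)) ⊗ₜ[k] ((E k T l l) ⊗ₜ[k] P m)

/-- `u ⊗ v ↦ (E_{λλ} ⊗ u) ⊗ (E_{λλ} ⊗ v)`. -/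
def embAt (l : T) : U ⊗[k] U →ₗ[k] (Matrix T T k ⊗[k] U) ⊗[k] (Matrix T T k ⊗[k] U) :=
  TensorProduct.map (TensorProduct.mk k (Matrix T T k) U (E k T l l))
    (TensorProduct.mk k (Matrix T T k) U (E k T l l))

/-- The embedding `J ↦ Ĵ = Σ_λ E_{λλ}J⁽¹⁾(λ) ⊗ E_{λλ}J⁽²⁾(λ)` of a
`U ⊗ U`-valued function on `T` into `H ⊗ H`. -/
def emb (J : T → U ⊗[k] U) : (Matrix T T k ⊗[k] U) ⊗[k] (Matrix T T k ⊗[k] U) := ∑ l : T, embAt k T U l (J l)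

/-- `x = a ⊗ b ↦ a ⊗ b ⊗ P_μ ∈ U ⊗ U ⊗ U`. -/
def withP (m : T) : U ⊗[k] U →ₗ[k] U ⊗[k] (U ⊗[k] U) :=
  TensorProduct.map LinearMap.id ((TensorProduct.mk k U U).flip (P m))

/-- `x ↦ P_μ ⊗ x ∈ U ⊗ U ⊗ U`. -/
def withPleft (m : T) : U ⊗[k] U →ₗ[k] U ⊗[k] (U ⊗[k] U) :=
  TensorProduct.mk k U (U ⊗[k] U) (P m)

/-- `J` is a dynamical twist for `U`, with pointwise inverse `Jbar`. -/
structure IsDynTwist (J Jbar : T → U ⊗[k] U) : Prop where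
  inv_right : ∀ l : T, J l * Jbar l = 1
  inv_left : ∀ l : T, Jbar l * J l = 1
  zero_weight : ∀ l m : T,
    J l * Coalgebra.comul (R := k) (P m) = Coalgebra.comul (R := k) (P m) * J l
  counit_left : ∀ l : T, WHA.epsL k U Coalgebra.counit (J l) = 1
  counit_right : ∀ l : T, WHA.epsR k U Coalgebra.counit (J l) = 1
  dyn : ∀ l : T,
    WHA.ext12 k U Coalgebra.comul (J l) * (∑ m : T, withP k T U P m (J (l + m)))
      = WHA.ext23 k U Coalgebra.comul (J l) * WHA.leg23 k U (J l)

end DQG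

section ThetaAux

open DQG

set_option linter.unusedSectionVars false
set_option synthInstance.maxHeartbeats 400000
set_option maxHeartbeats 4000000

variable (k : Type*) [Field k]
  (T : Type*) [AddCommGroup T] [Fintype T] [DecidableEq T]
  (U : Type*) [Ring U] [HopfAlgebra k U]

lemma sum_rot {M : Type*} [AddCommMonoid M] (f : T → T → T → M) :
    (∑ a : T, ∑ b : T, ∑ c : T, f a b c) = ∑ c : T, ∑ a : T, ∑ b : T, f a b c := by
  trans (∑ a : T, ∑ c : T, ∑ b : T, f a b c)
  · exact Finset.sum_congr rfl fun a _ => Finset.sum_comm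
  · exact Finset.sum_comm

lemma sum_diag {M : Type*} [AddCommMonoid M] (f : T → T → M) (a b : T)
    (h0 : ∀ x y, ¬(x = a ∧ y = b) → f x y = 0) :
    (∑ x : T, ∑ y : T, f x y) = f a b := by
  rw [Finset.sum_eq_single a (fun x _ hx => Finset.sum_eq_zero fun y _ => h0 x y (by tauto))
      (fun h => absurd (Finset.mem_univ a) h)]
  exact Finset.sum_eq_single b (fun y _ hy => h0 a y (by tauto))
      (fun h => absurd (Finset.mem_univ b) h)

lemma ite_idem' {α : Type*} (c : Prop) [Decidable c] (x y : α) :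
    (if c then (if c then x else y) else y) = if c then x else y := by
  by_cases h : c <;> simp [h]

lemma sum_if_const {α M : Type*} [AddCommMonoid M] (s : Finset α) (c : Prop) [Decidable c]
    (f : α → M) : (∑ x ∈ s, if c then f x else 0) = if c then ∑ x ∈ s, f x else 0 := by
  split <;> simp

lemma E_mul (a b c d : T) :
    E k T a b * E k T c d = if b = c then E k T a d else 0 := by
  by_cases h : b = c
  · subst h; simp [E, Matrix.single_mul_single_same]
  · simp [E, h]

lemma one_M : (1 : Matrix T T k) = ∑ l : T, E k T l l := by
  ext i j
  rw [Matrix.sum_apply]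
  simp only [E, Matrix.single, Matrix.of_apply, Matrix.one_apply]
  by_cases h : i = j
  · subst h; simp
  · rw [if_neg h]
    exact (Finset.sum_eq_zero fun l _ => by
      rw [if_neg]; rintro ⟨rfl, rfl⟩; exact h rfl).symm

lemma entry_E (a b l m : T) :
    entry k T a b (E k T l m) = if l = a ∧ m = b then (1:k) else 0 := rfl

lemma ΔM_E (l m : T) : ΔM k T (E k T l m) = E k T l m ⊗ₜ[k] E k T l m := by
  simp only [ΔM, LinearMap.coe_sum, Finset.sum_apply, LinearMap.smulRight_apply, entry_E,
    ite_smul, one_smul, zero_smul, ite_and, sum_if_const, Finset.sum_ite_eq, Finset.mem_univ,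
    if_true]

lemma εM_E (l m : T) : εM k T (E k T l m) = 1 := by
  simp only [εM, LinearMap.coe_sum, Finset.sum_apply, entry_E, ite_and, sum_if_const,
    Finset.sum_ite_eq, Finset.mem_univ, if_true]

lemma comul_one_U : Coalgebra.comul (R := k) (1:U) = (1:U) ⊗ₜ[k] (1:U) := by
  rw [Bialgebra.comul_one]; rfl

lemma ΔH_E_one (l m : T) :
    ΔH k T U (E k T l m ⊗ₜ[k] (1:U)) =
      (E k T l m ⊗ₜ[k] (1:U)) ⊗ₜ[k] (E k T l m ⊗ₜ[k] (1:U)) := by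
  rw [ΔH, LinearMap.comp_apply, TensorProduct.map_tmul, ΔM_E, comul_one_U]
  rw [LinearEquiv.coe_coe, TensorProduct.tensorTensorTensorComm_tmul]

lemma one_H : (1 : Matrix T T k ⊗[k] U) = ∑ l : T, E k T l l ⊗ₜ[k] (1:U) := by
  rw [Algebra.TensorProduct.one_def, one_M, TensorProduct.sum_tmul]

lemma ΔH_one : ΔH k T U 1 = ∑ l : T, (E k T l l ⊗ₜ[k] (1:U)) ⊗ₜ[k] (E k T l l ⊗ₜ[k] (1:U)) := by
  rw [one_H, map_sum]
  exact Finset.sum_congr rfl fun l _ => ΔH_E_one k T U l l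

lemma εH_E (l m : T) (u : U) :
    εH k T U (E k T l m ⊗ₜ[k] u) = Coalgebra.counit (R := k) u := by
  simp [εH, εM_E]

lemma H_mul (a b c d : T) (u v : U) :
    ((E k T a b ⊗ₜ[k] u : Matrix T T k ⊗[k] U) * (E k T c d ⊗ₜ[k] v)) =
      if b = c then E k T a d ⊗ₜ[k] (u * v) else 0 := by
  rw [Algebra.TensorProduct.tmul_mul_tmul, E_mul]
  split <;> simp

lemma sum_mulHH {α : Type*} (s : Finset α)
    (g : α → (Matrix T T k ⊗[k] U) ⊗[k] (Matrix T T k ⊗[k] U)) (x) :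
    (∑ i ∈ s, g i) * x = ∑ i ∈ s, g i * x := Finset.sum_mul s g x

lemma mul_sumHH {α : Type*} (s : Finset α)
    (x) (g : α → (Matrix T T k ⊗[k] U) ⊗[k] (Matrix T T k ⊗[k] U)) :
    x * (∑ i ∈ s, g i) = ∑ i ∈ s, x * g i := Finset.mul_sum s g x

lemma sum_mulHHH {α : Type*} (s : Finset α)
    (g : α → (Matrix T T k ⊗[k] U) ⊗[k] ((Matrix T T k ⊗[k] U) ⊗[k] (Matrix T T k ⊗[k] U))) (x) :
    (∑ i ∈ s, g i) * x = ∑ i ∈ s, g i * x := Finset.sum_mul s g x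

lemma mul_sumHHH {α : Type*} (s : Finset α)
    (x) (g : α → (Matrix T T k ⊗[k] U) ⊗[k] ((Matrix T T k ⊗[k] U) ⊗[k] (Matrix T T k ⊗[k] U))) :
    x * (∑ i ∈ s, g i) = ∑ i ∈ s, x * g i := Finset.mul_sum s g x

lemma tmul_mul_HHH (x x' : Matrix T T k ⊗[k] U)
    (y y' : (Matrix T T k ⊗[k] U) ⊗[k] (Matrix T T k ⊗[k] U)) :
    (x ⊗ₜ[k] y) * (x' ⊗ₜ[k] y') = (x * x') ⊗ₜ[k] (y * y') := by
  exact Algebra.TensorProduct.tmul_mul_tmul (R := k) (A := Matrix T T k ⊗[k] U)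
    (B := (Matrix T T k ⊗[k] U) ⊗[k] (Matrix T T k ⊗[k] U)) x x' y y'

lemma one_mulH (x : Matrix T T k ⊗[k] U) : 1 * x = x := one_mul x

lemma mul_oneH (x : Matrix T T k ⊗[k] U) : x * 1 = x := mul_one x

variable (P : T → U)

lemma ΔH_E_P (hP : IsPSystem k T U P) (l m n : T) :
    ΔH k T U (E k T l m ⊗ₜ[k] P n) =
      ∑ v : T, (E k T l m ⊗ₜ[k] P v) ⊗ₜ[k] (E k T l m ⊗ₜ[k] P (n - v)) := by
  rw [ΔH, LinearMap.comp_apply, TensorProduct.map_tmul, ΔM_E, hP.comul_P,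
    TensorProduct.tmul_sum, map_sum]
  exact Finset.sum_congr rfl fun v _ => by
    rw [LinearEquiv.coe_coe, TensorProduct.tensorTensorTensorComm_tmul]

lemma ΔH_E_P' (hP : IsPSystem k T U P) (l m n : T) :
    ΔH k T U (E k T l m ⊗ₜ[k] P n) =
      ∑ v : T, (E k T l m ⊗ₜ[k] P (n - v)) ⊗ₜ[k] (E k T l m ⊗ₜ[k] P v) := by
  rw [ΔH_E_P k T U P hP]
  refine Fintype.sum_equiv (Equiv.subLeft n) _ _ fun v => ?_
  simp [sub_sub_cancel]

lemma Θbar_eq : DQG.Θbar k T U P =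
    ∑ a : T, ∑ r : T, (E k T r a ⊗ₜ[k] (1:U)) ⊗ₜ[k] (E k T a a ⊗ₜ[k] P (r - a)) := by
  unfold DQG.Θbar
  refine Finset.sum_congr rfl fun a _ => ?_
  refine Fintype.sum_equiv (Equiv.addLeft a) _ _ fun m => ?_
  simp [add_sub_cancel_left]

lemma conj1 (hP : IsPSystem k T U P) :
    DQG.Θ k T U P = DQG.ΔH k T U 1 * DQG.Θ k T U P := by
  rw [ΔH_one]
  simp only [DQG.Θ, sum_mulHH, mul_sumHH,
    Algebra.TensorProduct.tmul_mul_tmul, E_mul, one_mul, mul_one,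
    TensorProduct.ite_tmul, TensorProduct.tmul_ite, TensorProduct.tmul_zero,
    TensorProduct.zero_tmul, ite_idem', sum_if_const, Finset.sum_ite_eq,
    Finset.sum_ite_eq', Finset.mem_univ, if_true]

lemma conj2 (hP : IsPSystem k T U P) :
    DQG.Θbar k T U P = DQG.Θbar k T U P * DQG.ΔH k T U 1 := by
  -- C2
  rw [ΔH_one]
  simp only [DQG.Θbar, sum_mulHH, mul_sumHH,
    Algebra.TensorProduct.tmul_mul_tmul, E_mul, one_mul, mul_one,
    TensorProduct.ite_tmul, TensorProduct.tmul_ite, TensorProduct.tmul_zero,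
    TensorProduct.zero_tmul, ite_idem', sum_if_const, Finset.sum_ite_eq,
    Finset.sum_ite_eq', Finset.mem_univ, if_true]

lemma conj3 (hP : IsPSystem k T U P) :
    DQG.Θ k T U P * DQG.Θbar k T U P = DQG.ΔH k T U 1 := by
  -- C3
  rw [ΔH_one]
  simp only [DQG.Θ, DQG.Θbar, sum_mulHH, mul_sumHH,
    Algebra.TensorProduct.tmul_mul_tmul, E_mul, hP.orth, one_mul, mul_one,
    TensorProduct.ite_tmul, TensorProduct.tmul_ite, TensorProduct.tmul_zero,
    TensorProduct.zero_tmul, ite_idem']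
  trans (∑ l : T, ∑ m : T, (DQG.E k T l l ⊗ₜ[k] (1:U)) ⊗ₜ[k] (DQG.E k T l l ⊗ₜ[k] P m))
  · refine Finset.sum_congr rfl fun l _ => Finset.sum_congr rfl fun m _ => ?_
    rw [sum_diag T _ l m (fun x y hxy => by split_ifs <;> simp_all)]
    simp
  · exact Finset.sum_congr rfl fun l _ => by
      rw [← TensorProduct.tmul_sum, ← TensorProduct.tmul_sum, hP.sum_one]

lemma conj4 (hP : IsPSystem k T U P) :
    WHA.epsL k (Matrix T T k ⊗[k] U) (DQG.εH k T U) (DQG.Θ k T U P) = 1 := by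
  -- C4
  rw [one_H]
  simp only [DQG.Θ, WHA.epsL, map_sum, LinearMap.coe_comp, Function.comp_apply,
    TensorProduct.map_tmul, εH_E, Bialgebra.counit_one, LinearMap.id_coe, id_eq,
    LinearEquiv.coe_coe, TensorProduct.lid_tmul, one_smul]
  exact Finset.sum_congr rfl fun l _ => by
    rw [← TensorProduct.tmul_sum, hP.sum_one]

lemma conj5 (hP : IsPSystem k T U P) :
    WHA.epsR k (Matrix T T k ⊗[k] U) (DQG.εH k T U) (DQG.Θ k T U P) = 1 := by
  -- C5
  rw [one_H]
  simp only [DQG.Θ, WHA.epsR, map_sum, LinearMap.coe_comp, Function.comp_apply,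
    TensorProduct.map_tmul, εH_E, hP.counit_P, LinearMap.id_coe, id_eq,
    LinearEquiv.coe_coe, TensorProduct.rid_tmul, ite_smul, one_smul, zero_smul,
    Finset.sum_ite_eq', Finset.mem_univ, if_true, add_zero]

lemma conj6 (hP : IsPSystem k T U P) :
    WHA.epsL k (Matrix T T k ⊗[k] U) (DQG.εH k T U) (DQG.Θbar k T U P) = 1 := by
  -- C6
  rw [one_H]
  simp only [DQG.Θbar, WHA.epsL, map_sum, LinearMap.coe_comp, Function.comp_apply,
    TensorProduct.map_tmul, εH_E, Bialgebra.counit_one, LinearMap.id_coe, id_eq,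
    LinearEquiv.coe_coe, TensorProduct.lid_tmul, one_smul]
  exact Finset.sum_congr rfl fun l _ => by
    rw [← TensorProduct.tmul_sum, hP.sum_one]

lemma conj7 (hP : IsPSystem k T U P) :
    WHA.epsR k (Matrix T T k ⊗[k] U) (DQG.εH k T U) (DQG.Θbar k T U P) = 1 := by
  -- C7
  rw [one_H]
  simp only [DQG.Θbar, WHA.epsR, map_sum, LinearMap.coe_comp, Function.comp_apply,
    TensorProduct.map_tmul, εH_E, hP.counit_P, LinearMap.id_coe, id_eq,
    LinearEquiv.coe_coe, TensorProduct.rid_tmul, ite_smul, one_smul, zero_smul,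
    Finset.sum_ite_eq', Finset.mem_univ, if_true, add_zero]

lemma conj8 (hP : IsPSystem k T U P) :
    WHA.ext12 k (Matrix T T k ⊗[k] U) (DQG.ΔH k T U) (DQG.Θ k T U P) * WHA.leg12 k (Matrix T T k ⊗[k] U) (DQG.Θ k T U P)
      = WHA.ext23 k (Matrix T T k ⊗[k] U) (DQG.ΔH k T U) (DQG.Θ k T U P) * WHA.leg23 k (Matrix T T k ⊗[k] U) (DQG.Θ k T U P) := by
  -- C8
  simp only [DQG.Θ, WHA.ext12, WHA.ext23, WHA.leg12, WHA.leg23, map_sum,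
    LinearMap.coe_comp, Function.comp_apply, LinearEquiv.coe_coe,
    TensorProduct.map_tmul, LinearMap.id_coe, id_eq, LinearMap.flip_apply,
    TensorProduct.mk_apply, ΔH_E_one, ΔH_E_P k T U P hP,
    TensorProduct.assoc_tmul, TensorProduct.tmul_sum, TensorProduct.sum_tmul]
  simp only [sum_mulHHH]
  simp only [mul_sumHHH]
  simp only [tmul_mul_HHH, Algebra.TensorProduct.tmul_mul_tmul,
    one_mulH, mul_oneH, E_mul, hP.orth, one_mul, mul_one,
    TensorProduct.ite_tmul, TensorProduct.tmul_ite, TensorProduct.tmul_zero,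
    TensorProduct.zero_tmul, ite_idem', sum_if_const, Finset.sum_ite_eq,
    Finset.sum_ite_eq', Finset.mem_univ, if_true]
  refine Finset.sum_congr rfl fun l _ => ?_
  conv_lhs => rw [Finset.sum_comm]
  conv_rhs => rw [Finset.sum_comm]
  refine Finset.sum_congr rfl fun v _ => ?_
  refine Fintype.sum_equiv (Equiv.addRight v) _ _ fun m => ?_
  simp only [Equiv.coe_addRight, add_sub_cancel_right, ← add_assoc]

lemma conj9 (hP : IsPSystem k T U P) :
    WHA.leg12 k (Matrix T T k ⊗[k] U) (DQG.Θbar k T U P) * WHA.ext12 k (Matrix T T k ⊗[k] U) (DQG.ΔH k T U) (DQG.Θbar k T U P)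
      = WHA.leg23 k (Matrix T T k ⊗[k] U) (DQG.Θbar k T U P) * WHA.ext23 k (Matrix T T k ⊗[k] U) (DQG.ΔH k T U) (DQG.Θbar k T U P) := by
  -- C9
  rw [Θbar_eq k T U P]
  simp only [WHA.ext12, WHA.ext23, WHA.leg12, WHA.leg23, map_sum,
    LinearMap.coe_comp, Function.comp_apply, LinearEquiv.coe_coe,
    TensorProduct.map_tmul, LinearMap.id_coe, id_eq, LinearMap.flip_apply,
    TensorProduct.mk_apply, ΔH_E_one, ΔH_E_P' k T U P hP,
    TensorProduct.assoc_tmul, TensorProduct.tmul_sum, TensorProduct.sum_tmul]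
  simp only [sum_mulHHH]
  simp only [mul_sumHHH]
  simp only [tmul_mul_HHH, Algebra.TensorProduct.tmul_mul_tmul,
    one_mulH, mul_oneH, E_mul, hP.orth, one_mul, mul_one,
    TensorProduct.ite_tmul, TensorProduct.tmul_ite, TensorProduct.tmul_zero,
    TensorProduct.zero_tmul, ite_idem', sum_if_const, Finset.sum_ite_eq,
    Finset.sum_ite_eq', Finset.mem_univ, if_true]
  conv_lhs => rw [sum_rot]
  refine Finset.sum_congr rfl fun x _ => Finset.sum_congr rfl fun a _ =>
    Finset.sum_congr rfl fun r _ => ?_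
  simp only [sub_sub_sub_cancel_right]

lemma conj10 (hP : IsPSystem k T U P) :
    WHA.ext12 k (Matrix T T k ⊗[k] U) (DQG.ΔH k T U) (DQG.Θbar k T U P) * WHA.ext23 k (Matrix T T k ⊗[k] U) (DQG.ΔH k T U) (DQG.Θ k T U P)
      = WHA.leg12 k (Matrix T T k ⊗[k] U) (DQG.Θ k T U P) * WHA.leg23 k (Matrix T T k ⊗[k] U) (DQG.Θbar k T U P) := by
  -- C10
  rw [Θbar_eq k T U P]
  simp only [DQG.Θ, WHA.ext12, WHA.ext23, WHA.leg12, WHA.leg23, map_sum,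
    LinearMap.coe_comp, Function.comp_apply, LinearEquiv.coe_coe,
    TensorProduct.map_tmul, LinearMap.id_coe, id_eq, LinearMap.flip_apply,
    TensorProduct.mk_apply, ΔH_E_one, ΔH_E_P' k T U P hP,
    TensorProduct.assoc_tmul, TensorProduct.tmul_sum, TensorProduct.sum_tmul]
  simp only [sum_mulHHH]
  simp only [mul_sumHHH]
  simp only [tmul_mul_HHH, Algebra.TensorProduct.tmul_mul_tmul,
    one_mulH, mul_oneH, E_mul, hP.orth, one_mul, mul_one,
    TensorProduct.ite_tmul, TensorProduct.tmul_ite, TensorProduct.tmul_zero,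
    TensorProduct.zero_tmul, ite_idem', sum_if_const, Finset.sum_ite_eq,
    Finset.sum_ite_eq', Finset.mem_univ, if_true]
  conv_rhs => rw [sum_rot]
  refine Finset.sum_congr rfl fun a _ => Finset.sum_congr rfl fun r _ => ?_
  refine Fintype.sum_equiv (Equiv.subRight (r - a)) _ _ fun y => ?_
  simp only [Equiv.subRight_apply, show r + (y - (r - a)) = a + y from by abel]

lemma conj11 (hP : IsPSystem k T U P) :
    WHA.ext23 k (Matrix T T k ⊗[k] U) (DQG.ΔH k T U) (DQG.Θbar k T U P) * WHA.ext12 k (Matrix T T k ⊗[k] U) (DQG.ΔH k T U) (DQG.Θ k T U P)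
      = WHA.leg23 k (Matrix T T k ⊗[k] U) (DQG.Θ k T U P) * WHA.leg12 k (Matrix T T k ⊗[k] U) (DQG.Θbar k T U P) := by
  -- C11
  rw [Θbar_eq k T U P]
  simp only [DQG.Θ, WHA.ext12, WHA.ext23, WHA.leg12, WHA.leg23, map_sum,
    LinearMap.coe_comp, Function.comp_apply, LinearEquiv.coe_coe,
    TensorProduct.map_tmul, LinearMap.id_coe, id_eq, LinearMap.flip_apply,
    TensorProduct.mk_apply, ΔH_E_one, ΔH_E_P k T U P hP,
    TensorProduct.assoc_tmul, TensorProduct.tmul_sum, TensorProduct.sum_tmul]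
  simp only [sum_mulHHH]
  simp only [mul_sumHHH]
  simp only [tmul_mul_HHH, Algebra.TensorProduct.tmul_mul_tmul,
    one_mulH, mul_oneH, E_mul, hP.orth, one_mul, mul_one,
    TensorProduct.ite_tmul, TensorProduct.tmul_ite, TensorProduct.tmul_zero,
    TensorProduct.zero_tmul, ite_idem', sum_if_const, Finset.sum_ite_eq,
    Finset.sum_ite_eq', Finset.mem_univ, if_true]
  refine Finset.sum_congr rfl fun a _ => ?_
  conv_rhs => rw [Finset.sum_comm]
  refine Finset.sum_congr rfl fun r _ => ?_
  refine Fintype.sum_equiv (Equiv.subLeft (r - a)) _ _ fun v => ?_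
  simp only [Equiv.subLeft_apply, show r - (a + (r - a - v)) = v from by abel]

end ThetaAux
set_option maxHeartbeats 1000000 in
set_option synthInstance.maxHeartbeats 200000 in
/-- `(Θ, Θ̄)` is a twist for the weak Hopf algebra `H = End_k(A) ⊗ U`. -/
theorem theta_is_twist
    (k : Type*) [Field k]
    (T : Type*) [AddCommGroup T] [Fintype T] [DecidableEq T]
    (U : Type*) [Ring U] [HopfAlgebra k U]
    (P : T → U) (hP : DQG.IsPSystem k T U P)
    (Th Thb : (Matrix T T k ⊗[k] U) ⊗[k] (Matrix T T k ⊗[k] U))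
    (hTh : Th = DQG.Θ k T U P) (hThb : Thb = DQG.Θbar k T U P) :
    Th = DQG.ΔH k T U 1 * Th ∧
    Thb = Thb * DQG.ΔH k T U 1 ∧
    Th * Thb = DQG.ΔH k T U 1 ∧
    WHA.epsL k (Matrix T T k ⊗[k] U) (DQG.εH k T U) Th = 1 ∧
    WHA.epsR k (Matrix T T k ⊗[k] U) (DQG.εH k T U) Th = 1 ∧
    WHA.epsL k (Matrix T T k ⊗[k] U) (DQG.εH k T U) Thb = 1 ∧
    WHA.epsR k (Matrix T T k ⊗[k] U) (DQG.εH k T U) Thb = 1 ∧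
    WHA.ext12 k (Matrix T T k ⊗[k] U) (DQG.ΔH k T U) Th * WHA.leg12 k (Matrix T T k ⊗[k] U) Th
      = WHA.ext23 k (Matrix T T k ⊗[k] U) (DQG.ΔH k T U) Th * WHA.leg23 k (Matrix T T k ⊗[k] U) Th ∧
    WHA.leg12 k (Matrix T T k ⊗[k] U) Thb * WHA.ext12 k (Matrix T T k ⊗[k] U) (DQG.ΔH k T U) Thb
      = WHA.leg23 k (Matrix T T k ⊗[k] U) Thb * WHA.ext23 k (Matrix T T k ⊗[k] U) (DQG.ΔH k T U) Thb ∧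
    WHA.ext12 k (Matrix T T k ⊗[k] U) (DQG.ΔH k T U) Thb * WHA.ext23 k (Matrix T T k ⊗[k] U) (DQG.ΔH k T U) Th
      = WHA.leg12 k (Matrix T T k ⊗[k] U) Th * WHA.leg23 k (Matrix T T k ⊗[k] U) Thb ∧
    WHA.ext23 k (Matrix T T k ⊗[k] U) (DQG.ΔH k T U) Thb * WHA.ext12 k (Matrix T T k ⊗[k] U) (DQG.ΔH k T U) Th
      = WHA.leg23 k (Matrix T T k ⊗[k] U) Th * WHA.leg12 k (Matrix T T k ⊗[k] U) Thb := by
  subst hTh; subst hThb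
  exact ⟨conj1 k T U P hP, conj2 k T U P hP, conj3 k T U P hP, conj4 k T U P hP,
    conj5 k T U P hP, conj6 k T U P hP, conj7 k T U P hP, conj8 k T U P hP,
    conj9 k T U P hP, conj10 k T U P hP, conj11 k T U P hP⟩
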